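/- Let A be a commutative ring, let a, p ∈ A, and let M be an A-module whose p-power torsion is bounded, say every element of M killed by some power of p is killed by p^s. Consider the A[T]-module M[T] := M ⊗_A A[T] of polynomials with coefficients in M. Then every element of M[T] killed by multiplication by (aT − p) is killed by p^s; that is, the kernel of the map M[T] → M[T], q ↦ (aT − p)·q, is annihilated by p^s. In particular, when aT − p is a nonzerodivisor of A[T], the module Tor₁^A(A[T]/(aT − p), M) is killed by a power of p. (The content of Lemma 4.2.11, which is the case A = A_n, a = ū₁, computed from the free resolution A[T] →(aT−p) A[T] of B̃_n.) -/

import Mathlib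

/-- **Lemma 4.2.11** (algebraic content).  Let `A` be a commutative ring, `a p ∈ A`, and `M`
an `A`-module whose `p`-power torsion is bounded by `p^s`.  Then every element of the
polynomial module `M[T]` killed by multiplication by `a·T - p` is killed by `p^s`; i.e. the
kernel of `(a·T - p) • - : M[T] → M[T]` is annihilated by `p^s`. -/
theorem polynomialModule_smul_ker_bounded_torsion
    (A : Type*) [CommRing A] (a p : A)
    (M : Type*) [AddCommGroup M] [Module A M]
    (s : ℕ) (hs : ∀ x : M, (∃ k : ℕ, p ^ k • x = 0) → p ^ s • x = 0) :
    ∀ q : PolynomialModule A M,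
      (Polynomial.C a * Polynomial.X - Polynomial.C p) • q = 0 →
      (Polynomial.C (p ^ s) : Polynomial A) • q = 0 := by
  intro q hq
  -- coefficientwise relation: for all n, (C a * X - C p) • q at n = 0
  have key : ∀ n : ℕ, p ^ (n + 1) • q.coeff n = 0 := by
    intro n
    induction n with
    | zero =>
      have h0 : ((Polynomial.C a * Polynomial.X - Polynomial.C p) • q).coeff 0 = (0 : PolynomialModule A M).coeff 0 := by rw [hq]
      rw [sub_smul, show ∀ x y : PolynomialModule A M, (x - y).coeff = x.coeff - y.coeff from fun x y => map_sub PolynomialModule.coeffAddEquiv x y, Finsupp.sub_apply] at h0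
      have hCaX : (Polynomial.C a * Polynomial.X : Polynomial A) = Polynomial.monomial 1 a := by
        simp [Polynomial.C_mul_X_eq_monomial]
      have hCp : (Polynomial.C p : Polynomial A) = Polynomial.monomial 0 p := by
        simp [Polynomial.monomial_zero_left]
      rw [hCaX, hCp, PolynomialModule.monomial_smul_apply, PolynomialModule.monomial_smul_apply]
        at h0
      simp only [Nat.not_succ_le_zero, if_false, Nat.le_zero, Nat.zero_le, if_true,
        Nat.sub_zero, zero_sub, neg_eq_zero] at h0
      rw [PolynomialModule.coeff_zero, Finsupp.zero_apply] at h0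
      simp only [if_neg (by norm_num : ¬ (1:ℕ) = 0), zero_sub, neg_eq_zero] at h0
      simpa using h0
    | succ n ih =>
      have h0 : ((Polynomial.C a * Polynomial.X - Polynomial.C p) • q).coeff (n + 1) = (0 : PolynomialModule A M).coeff (n + 1) := by rw [hq]
      rw [sub_smul, show ∀ x y : PolynomialModule A M, (x - y).coeff = x.coeff - y.coeff from fun x y => map_sub PolynomialModule.coeffAddEquiv x y, Finsupp.sub_apply] at h0
      have hCaX : (Polynomial.C a * Polynomial.X : Polynomial A) = Polynomial.monomial 1 a := by
        simp [Polynomial.C_mul_X_eq_monomial]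
      have hCp : (Polynomial.C p : Polynomial A) = Polynomial.monomial 0 p := by
        simp [Polynomial.monomial_zero_left]
      rw [hCaX, hCp, PolynomialModule.monomial_smul_apply, PolynomialModule.monomial_smul_apply]
        at h0
      simp only [Nat.le_add_left, if_true, Nat.zero_le, Nat.add_sub_cancel, Nat.sub_zero] at h0
      have h1 : p • q.coeff (n + 1) = a • q.coeff n := by
        rw [PolynomialModule.coeff_zero, Finsupp.zero_apply] at h0
        exact (sub_eq_zero.mp h0).symm
      have h2 : p ^ (n + 2) • q.coeff (n + 1) = p ^ (n + 1) • (p • q.coeff (n + 1)) := by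
        rw [pow_succ, mul_smul]
      rw [h2, h1, smul_comm, ih, smul_zero]
  -- now conclude
  refine PolynomialModule.ext (Finsupp.ext fun n => ?_)
  have hCps : (Polynomial.C (p ^ s) : Polynomial A) = Polynomial.monomial 0 (p ^ s) := by
    simp [Polynomial.monomial_zero_left]
  rw [hCps, PolynomialModule.monomial_smul_apply]
  simp only [Nat.zero_le, if_true, Nat.sub_zero, PolynomialModule.coeff_zero, Finsupp.zero_apply]
  exact hs (q.coeff n) ⟨n + 1, key n⟩
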